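/- Inverse-enrichment reduction: there exists an ALC_I(V)-k-bisimulation between (I,d) and (J,e) containing ([d],[e]) if and only if there exists an ALC(V^I)-k-bisimulation between the inverse-enrichments (I_I, d) and (J_I, e) containing ([d],[e]). -/
import Mathlib


/-- An interpretation over concept names `C` and role names `R` with domain `D`:
it maps concept names to subsets of the domain and role names to binary relations. -/
structure Interp (C R D : Type) where
  concept : C → Set D
  role : R → Set (D × D)

variable {C R DI DJ DK : Type}

/-- `Z` is a `k`-bisimulation between `I` and `J`: a set of pairs of nonempty sequences
of equal length at most `k+1` satisfying concept-name harmony between last elements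
and the role back-and-forth conditions (restricted to the length bound). -/
def IsKBisim (k : ℕ) (I : Interp C R DI) (J : Interp C R DJ)
    (Z : List DI → List DJ → Prop) : Prop :=
  (∀ s s', Z s s' → s ≠ [] ∧ s.length = s'.length ∧ s.length ≤ k + 1) ∧
  (∀ s s' d e, Z (s ++ [d]) (s' ++ [e]) → ∀ c, d ∈ I.concept c ↔ e ∈ J.concept c) ∧
  (∀ s s' d e, Z (s ++ [d]) (s' ++ [e]) → s.length + 2 ≤ k + 1 →
    ∀ r d', (d, d') ∈ I.role r →
      ∃ e', (e, e') ∈ J.role r ∧ Z (s ++ [d, d']) (s' ++ [e, e'])) ∧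
  (∀ s s' d e, Z (s ++ [d]) (s' ++ [e]) → s.length + 2 ≤ k + 1 →
    ∀ r e', (e, e') ∈ J.role r →
      ∃ d', (d, d') ∈ I.role r ∧ Z (s ++ [d, d']) (s' ++ [e, e']))

/-- The inverse-enrichment `I_I`: fresh role names `r_inv` (the `Sum.inr r` components)
are interpreted as the converses of the original roles; original symbols unchanged. -/
def invEnrich (I : Interp C R DI) : Interp C (R ⊕ R) DI where
  concept := I.concept
  role x :=
    match x with
    | Sum.inl r => I.role r
    | Sum.inr r => {p | (p.2, p.1) ∈ I.role r}

/-- The extra forth/back conditions for inverse steps of an `ALC_I`-`k`-bisimulation. -/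
def InvCond (k : ℕ) (I : Interp C R DI) (J : Interp C R DJ)
    (Z : List DI → List DJ → Prop) : Prop :=
  (∀ s s' d e, Z (s ++ [d]) (s' ++ [e]) → s.length + 2 ≤ k + 1 →
    ∀ r d', (d', d) ∈ I.role r →
      ∃ e', (e', e) ∈ J.role r ∧ Z (s ++ [d, d']) (s' ++ [e, e'])) ∧
  (∀ s s' d e, Z (s ++ [d]) (s' ++ [e]) → s.length + 2 ≤ k + 1 →
    ∀ r e', (e', e) ∈ J.role r →
      ∃ d', (d', d) ∈ I.role r ∧ Z (s ++ [d, d']) (s' ++ [e, e']))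

/-- there is an `ALC_I(V)`-`k`-bisimulation between `(I,d)` and `(J,e)`
containing `([d],[e])` iff there is an `ALC(V^I)`-`k`-bisimulation between the
inverse-enrichments containing `([d],[e])`. -/
theorem invEnrich_reduction (k : ℕ)
    (I : Interp C R DI) (J : Interp C R DJ) (d : DI) (e : DJ) :
    (∃ Z : List DI → List DJ → Prop,
       (IsKBisim k I J Z ∧ InvCond k I J Z) ∧ Z [d] [e]) ↔
    (∃ Z : List DI → List DJ → Prop,
       IsKBisim k (invEnrich I) (invEnrich J) Z ∧ Z [d] [e]) := by
  constructor
  · rintro ⟨Z, ⟨⟨hlen, hcon, hf, hb⟩, hinvf, hinvb⟩, hZ⟩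
    refine ⟨Z, ⟨hlen, hcon, ?_, ?_⟩, hZ⟩
    · rintro s s' a b hab hk (r | r) d' hd'
      · exact hf s s' a b hab hk r d' hd'
      · exact hinvf s s' a b hab hk r d' hd'
    · rintro s s' a b hab hk (r | r) e' he'
      · exact hb s s' a b hab hk r e' he'
      · exact hinvb s s' a b hab hk r e' he'
  · rintro ⟨Z, ⟨hlen, hcon, hf, hb⟩, hZ⟩
    refine ⟨Z, ⟨⟨hlen, hcon, ?_, ?_⟩, ?_, ?_⟩, hZ⟩
    · exact fun s s' a b hab hk r => hf s s' a b hab hk (Sum.inl r)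
    · exact fun s s' a b hab hk r => hb s s' a b hab hk (Sum.inl r)
    · exact fun s s' a b hab hk r => hf s s' a b hab hk (Sum.inr r)
    · exact fun s s' a b hab hk r => hb s s' a b hab hk (Sum.inr r)
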